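/- Let H be a quasi-Hopf algebra with reassociator Φ, antipode S and distinguished elements α, β. Define γ = S(x¹X²)α x²X³₁ ⊗ S(X¹)α x³X³₂. Then γ also equals S(X²x¹₂)α X³x² ⊗ S(X¹x¹₁)α x³, where Φ = X¹⊗X²⊗X³ and Φ⁻¹ = x¹⊗x²⊗x³ (summation understood). -/

import Mathlib

open TensorProduct BigOperators

/-- A quasi-bialgebra (Drinfeld), with reassociator `Φ` presented as an explicit finite
sum of pure tensors `∑ i, X1 i ⊗ X2 i ⊗ X3 i`, and `Φ⁻¹ = ∑ j, x1 j ⊗ x2 j ⊗ x3 j`. -/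
structure QuasiBialgebra (k H : Type*) [Field k] [Ring H] [Algebra k H]
    (ι κ : Type*) [Fintype ι] [Fintype κ] where
  Δ : H →ₐ[k] H ⊗[k] H
  ε : H →ₐ[k] k
  X1 : ι → H
  X2 : ι → H
  X3 : ι → H
  x1 : κ → H
  x2 : κ → H
  x3 : κ → H
  Φ_inv_right :
    (∑ i, X1 i ⊗ₜ[k] (X2 i ⊗ₜ[k] X3 i)) * (∑ j, x1 j ⊗ₜ[k] (x2 j ⊗ₜ[k] x3 j)) = 1
  Φ_inv_left :
    (∑ j, x1 j ⊗ₜ[k] (x2 j ⊗ₜ[k] x3 j)) * (∑ i, X1 i ⊗ₜ[k] (X2 i ⊗ₜ[k] X3 i)) = 1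
  quasi_coassoc : ∀ h : H,
    (Algebra.TensorProduct.map (AlgHom.id k H) Δ) (Δ h)
        * (∑ i, X1 i ⊗ₜ[k] (X2 i ⊗ₜ[k] X3 i)) =
      (∑ i, X1 i ⊗ₜ[k] (X2 i ⊗ₜ[k] X3 i))
        * (Algebra.TensorProduct.assoc k k k H H H)
            ((Algebra.TensorProduct.map Δ (AlgHom.id k H)) (Δ h))
  counit_right : ∀ h : H,
    (TensorProduct.rid k H) (TensorProduct.map LinearMap.id ε.toLinearMap (Δ h)) = h
  counit_left : ∀ h : H,
    (TensorProduct.lid k H) (TensorProduct.map ε.toLinearMap LinearMap.id (Δ h)) = h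
  cocycle :
    ((∑ i, (1 : H) ⊗ₜ[k] (X1 i ⊗ₜ[k] (X2 i ⊗ₜ[k] X3 i)))
        * (∑ i, X1 i ⊗ₜ[k] ((Algebra.TensorProduct.assoc k k k H H H) (Δ (X2 i) ⊗ₜ[k] X3 i)))
        * (∑ i, X1 i ⊗ₜ[k] (X2 i ⊗ₜ[k] (X3 i ⊗ₜ[k] (1 : H)))))
      = (∑ i, X1 i ⊗ₜ[k] (X2 i ⊗ₜ[k] Δ (X3 i)))
        * (∑ i, (Algebra.TensorProduct.assoc k k k H H (H ⊗[k] H))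
            (Δ (X1 i) ⊗ₜ[k] (X2 i ⊗ₜ[k] X3 i)))
  counit_Φ : (∑ i, ε (X2 i) • (X1 i ⊗ₜ[k] X3 i)) = 1

/-- A quasi-Hopf algebra: a quasi-bialgebra with an anti-algebra map `S` and
distinguished elements `α`, `β` satisfying Drinfeld's antipode axioms. -/
structure QuasiHopf (k H : Type*) [Field k] [Ring H] [Algebra k H]
    (ι κ : Type*) [Fintype ι] [Fintype κ] extends QuasiBialgebra k H ι κ where
  S : H →ₗ[k] H
  S_mul : ∀ a b : H, S (a * b) = S b * S a
  S_one : S 1 = 1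
  α : H
  β : H
  antipode_left : ∀ h : H,
    LinearMap.mul' k H
      (TensorProduct.map ((LinearMap.mulRight k α).comp S) LinearMap.id (Δ h)) = ε h • α
  antipode_right : ∀ h : H,
    LinearMap.mul' k H
      (TensorProduct.map (LinearMap.mulRight k β) S (Δ h)) = ε h • β
  antipode_Φ : ∑ i, X1 i * β * S (X2 i) * α * X3 i = 1
  antipode_Φinv : ∑ j, S (x1 j) * α * x2 j * β * S (x3 j) = 1

/-- A quasitriangular quasi-Hopf algebra: `R = ∑ a, r1 a ⊗ r2 a`,
`R⁻¹ = ∑ b, ri1 b ⊗ ri2 b`, with the quasitriangularity axioms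
`(Δ ⊗ id)(R) = Φ₂₃₁ R₁₃ Φ₁₃₂⁻¹ R₂₃ Φ`, `(id ⊗ Δ)(R) = Φ₂₃₁⁻¹ R₁₃ Φ₂₁₃ R₁₂ Φ⁻¹`
and `Δᶜᵒᵖ(h) R = R Δ(h)`, all written out on pure tensors. -/
structure QuasiTriangular (k H : Type*) [Field k] [Ring H] [Algebra k H]
    (ι κ ρ σ : Type*) [Fintype ι] [Fintype κ] [Fintype ρ] [Fintype σ]
    extends QuasiHopf k H ι κ where
  r1 : ρ → H
  r2 : ρ → H
  ri1 : σ → H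
  ri2 : σ → H
  R_inv_right : (∑ a, r1 a ⊗ₜ[k] r2 a) * (∑ b, ri1 b ⊗ₜ[k] ri2 b) = 1
  R_inv_left : (∑ b, ri1 b ⊗ₜ[k] ri2 b) * (∑ a, r1 a ⊗ₜ[k] r2 a) = 1
  qt1 : (∑ a, (Algebra.TensorProduct.assoc k k k H H H) (Δ (r1 a) ⊗ₜ[k] r2 a))
      = (∑ i, X2 i ⊗ₜ[k] (X3 i ⊗ₜ[k] X1 i))
        * (∑ a, r1 a ⊗ₜ[k] ((1 : H) ⊗ₜ[k] r2 a))
        * (∑ j, x1 j ⊗ₜ[k] (x3 j ⊗ₜ[k] x2 j))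
        * (∑ a, (1 : H) ⊗ₜ[k] (r1 a ⊗ₜ[k] r2 a))
        * (∑ i, X1 i ⊗ₜ[k] (X2 i ⊗ₜ[k] X3 i))
  qt2 : (∑ a, r1 a ⊗ₜ[k] Δ (r2 a))
      = (∑ j, x3 j ⊗ₜ[k] (x1 j ⊗ₜ[k] x2 j))
        * (∑ a, r1 a ⊗ₜ[k] ((1 : H) ⊗ₜ[k] r2 a))
        * (∑ i, X2 i ⊗ₜ[k] (X1 i ⊗ₜ[k] X3 i))
        * (∑ a, r1 a ⊗ₜ[k] (r2 a ⊗ₜ[k] (1 : H)))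
        * (∑ j, x1 j ⊗ₜ[k] (x2 j ⊗ₜ[k] x3 j))
  qt3 : ∀ h : H,
    (TensorProduct.comm k H H) (Δ h) * (∑ a, r1 a ⊗ₜ[k] r2 a)
      = (∑ a, r1 a ⊗ₜ[k] r2 a) * Δ h

/-- The Drinfeld element `u = S(R² x² β S(x³)) α R¹ x¹` of a quasitriangular
quasi-Hopf algebra. -/
noncomputable def QuasiTriangular.u {k H : Type*} [Field k] [Ring H] [Algebra k H]
    {ι κ ρ σ : Type*} [Fintype ι] [Fintype κ] [Fintype ρ] [Fintype σ]
    (Q : QuasiTriangular k H ι κ ρ σ) : H :=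
  ∑ a, ∑ j, Q.S (Q.r2 a * Q.x2 j * Q.β * Q.S (Q.x3 j)) * Q.α * (Q.r1 a * Q.x1 j)


set_option maxHeartbeats 2000000


section Helpers
variable {k H : Type*} [Field k] [Ring H] [Algebra k H] {ι : Type*} [Fintype ι]

-- distributivity classes (instance-path repair)
instance : RightDistribClass (H ⊗[k] H) := by
  exact Distrib.rightDistribClass (H ⊗[k] H)
instance : LeftDistribClass (H ⊗[k] H) := by
  exact Distrib.leftDistribClass (H ⊗[k] H)
instance : RightDistribClass (H ⊗[k] (H ⊗[k] (H ⊗[k] H))) := by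
  exact Distrib.rightDistribClass (H ⊗[k] (H ⊗[k] (H ⊗[k] H)))
instance : LeftDistribClass (H ⊗[k] (H ⊗[k] (H ⊗[k] H))) := by
  exact Distrib.leftDistribClass (H ⊗[k] (H ⊗[k] (H ⊗[k] H)))

lemma q4_sum_mul (f : ι → H ⊗[k] (H ⊗[k] (H ⊗[k] H))) (x : H ⊗[k] (H ⊗[k] (H ⊗[k] H))) :
    (∑ i, f i) * x = ∑ i, f i * x := by
  have h := map_sum (LinearMap.mulRight k x) f Finset.univ
  simp only [LinearMap.mulRight_apply] at h; exact h

lemma q4_mul_sum (f : ι → H ⊗[k] (H ⊗[k] (H ⊗[k] H))) (x : H ⊗[k] (H ⊗[k] (H ⊗[k] H))) :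
    x * (∑ i, f i) = ∑ i, x * f i := by
  have h := map_sum (LinearMap.mulLeft k x) f Finset.univ
  simp only [LinearMap.mulLeft_apply] at h; exact h

lemma q4_mul_zero (x : H ⊗[k] (H ⊗[k] (H ⊗[k] H))) :
    x * (0 : H ⊗[k] (H ⊗[k] (H ⊗[k] H))) = 0 := by
  have h := map_zero (LinearMap.mulLeft k x)
  simp only [LinearMap.mulLeft_apply] at h; exact h

lemma q4_zero_mul (x : H ⊗[k] (H ⊗[k] (H ⊗[k] H))) :
    (0 : H ⊗[k] (H ⊗[k] (H ⊗[k] H))) * x = 0 := by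
  have h := map_zero (LinearMap.mulRight k x)
  simp only [LinearMap.mulRight_apply] at h; exact h

lemma q4_mul_add (x y z : H ⊗[k] (H ⊗[k] (H ⊗[k] H))) : x * (y + z) = x * y + x * z :=
  mul_add x y z

lemma q4_add_mul (x y z : H ⊗[k] (H ⊗[k] (H ⊗[k] H))) : (x + y) * z = x * z + y * z :=
  add_mul x y z

lemma q4_mul_assoc (x y z : H ⊗[k] (H ⊗[k] (H ⊗[k] H))) : x * y * z = x * (y * z) :=
  mul_assoc x y z

lemma q4_one_mul (x : H ⊗[k] (H ⊗[k] (H ⊗[k] H))) : 1 * x = x := one_mul x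
lemma q4_mul_one (x : H ⊗[k] (H ⊗[k] (H ⊗[k] H))) : x * 1 = x := mul_one x

lemma t2_mul_assoc (x y z : H ⊗[k] H) : x * y * z = x * (y * z) := mul_assoc x y z
lemma t2_mul_zero (x : H ⊗[k] H) : x * (0 : H ⊗[k] H) = 0 := by
  have h := map_zero (LinearMap.mulLeft k x)
  simp only [LinearMap.mulLeft_apply] at h; exact h
lemma t2_zero_mul (x : H ⊗[k] H) : (0 : H ⊗[k] H) * x = 0 := by
  have h := map_zero (LinearMap.mulRight k x)
  simp only [LinearMap.mulRight_apply] at h; exact h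
lemma t2_mul_add (x y z : H ⊗[k] H) : x * (y + z) = x * y + x * z := mul_add x y z
lemma t2_add_mul (x y z : H ⊗[k] H) : (x + y) * z = x * z + y * z := add_mul x y z

end Helpers

noncomputable def Lmap (k : Type*) {H : Type*} [Field k] [Ring H] [Algebra k H]
    (S : H →ₗ[k] H) (α : H) : H ⊗[k] H →ₗ[k] H :=
  (LinearMap.mul' k H) ∘ₗ
    (TensorProduct.map ((LinearMap.mulRight k α).comp S) LinearMap.id)

@[simp] lemma Lmap_tmul {k H : Type*} [Field k] [Ring H] [Algebra k H]
    (S : H →ₗ[k] H) (α x y : H) : Lmap k S α (x ⊗ₜ[k] y) = S x * α * y := by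
  simp [Lmap]

noncomputable def Gmap (k : Type*) {H : Type*} [Field k] [Ring H] [Algebra k H]
    (S : H →ₗ[k] H) (α : H) : H ⊗[k] (H ⊗[k] (H ⊗[k] H)) →ₗ[k] H ⊗[k] H :=
  (TensorProduct.map (Lmap k S α) (Lmap k S α)) ∘ₗ
    (TensorProduct.assoc k H H (H ⊗[k] H)).symm.toLinearMap ∘ₗ
    (LinearMap.lTensor H (TensorProduct.leftComm k H H H).toLinearMap) ∘ₗ
    (TensorProduct.leftComm k H H (H ⊗[k] H)).toLinearMap

@[simp] lemma Gmap_tmul {k H : Type*} [Field k] [Ring H] [Algebra k H]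
    (S : H →ₗ[k] H) (α a b c d : H) :
    Gmap k S α (a ⊗ₜ[k] (b ⊗ₜ[k] (c ⊗ₜ[k] d))) = (S b * α * c) ⊗ₜ[k] (S a * α * d) := by
  simp [Gmap, TensorProduct.leftComm_tmul, TensorProduct.assoc_symm_tmul]

lemma Gmap_tmul_tmul {k H : Type*} [Field k] [Ring H] [Algebra k H]
    (S : H →ₗ[k] H) (α a b : H) (w : H ⊗[k] H) :
    Gmap k S α (a ⊗ₜ[k] (b ⊗ₜ[k] w)) = ((S b * α) ⊗ₜ[k] (S a * α)) * w := by
  induction w using TensorProduct.induction_on with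
  | zero => rw [tmul_zero, tmul_zero, LinearMap.map_zero, t2_mul_zero]
  | add w1 w2 h1 h2 => rw [tmul_add, tmul_add, LinearMap.map_add, h1, h2, t2_mul_add]
  | tmul c d => rw [Gmap_tmul, Algebra.TensorProduct.tmul_mul_tmul, mul_assoc, mul_assoc]

lemma aux2 {k H : Type*} [Field k] [Ring H] [Algebra k H]
    (S : H →ₗ[k] H) (hS : ∀ a b : H, S (a * b) = S b * S a)
    (α X Y a b c d : H) (t : H ⊗[k] H) :
    Gmap k S α ((X ⊗ₜ[k] ((Algebra.TensorProduct.assoc k k k H H H) (t ⊗ₜ[k] Y)))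
        * (a ⊗ₜ[k] (b ⊗ₜ[k] (c ⊗ₜ[k] d))))
      = (S b ⊗ₜ[k] S a) * ((Lmap k S α t ⊗ₜ[k] (S X * α * Y)) * (c ⊗ₜ[k] d)) := by
  induction t using TensorProduct.induction_on with
  | zero =>
      rw [zero_tmul, map_zero, tmul_zero, q4_zero_mul, LinearMap.map_zero,
        LinearMap.map_zero, zero_tmul, t2_zero_mul, t2_mul_zero]
  | add t1 t2 h1 h2 =>
      rw [add_tmul, map_add, tmul_add, q4_add_mul, LinearMap.map_add, h1, h2,
        LinearMap.map_add, add_tmul, t2_add_mul, t2_mul_add]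
  | tmul p q =>
      simp only [Algebra.TensorProduct.assoc_tmul, Algebra.TensorProduct.tmul_mul_tmul,
        Gmap_tmul, Lmap_tmul, hS, mul_assoc]

lemma aux3 {k H : Type*} [Field k] [Ring H] [Algebra k H]
    (S : H →ₗ[k] H) (α X1 X2 X3 c d : H) (t : H ⊗[k] H) :
    Gmap k S α ((X1 ⊗ₜ[k] (X2 ⊗ₜ[k] (X3 ⊗ₜ[k] (1 : H))))
        * ((Algebra.TensorProduct.assoc k k k H H (H ⊗[k] H)) (t ⊗ₜ[k] (c ⊗ₜ[k] d))))
      = (TensorProduct.map S S ((X2 ⊗ₜ[k] X1) * (TensorProduct.comm k H H) t))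
          * ((α * X3 * c) ⊗ₜ[k] (α * d)) := by
  induction t using TensorProduct.induction_on with
  | zero =>
      have hc : (TensorProduct.comm k H H) (0 : H ⊗[k] H) = 0 := map_zero _
      have hm : TensorProduct.map S S (0 : H ⊗[k] H) = 0 := map_zero _
      rw [zero_tmul, map_zero, q4_mul_zero, LinearMap.map_zero, hc, t2_mul_zero, hm,
        t2_zero_mul]
  | add t1 t2 h1 h2 =>
      have hc : (TensorProduct.comm k H H) (t1 + t2)
          = (TensorProduct.comm k H H) t1 + (TensorProduct.comm k H H) t2 := map_add _ _ _
      rw [add_tmul, map_add, q4_mul_add, LinearMap.map_add, h1, h2, hc, t2_mul_add,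
        LinearMap.map_add, t2_add_mul]
  | tmul p q =>
      simp only [Algebra.TensorProduct.assoc_tmul, Algebra.TensorProduct.tmul_mul_tmul,
        Gmap_tmul, TensorProduct.comm_tmul, TensorProduct.map_tmul, one_mul, mul_assoc]

noncomputable def Wmap (k : Type*) {H : Type*} [Field k] [Ring H] [Algebra k H]
    (S : H →ₗ[k] H) (α a b c d : H) : H →ₗ[k] H ⊗[k] H :=
  (LinearMap.mulLeft k (S b ⊗ₜ[k] S a)) ∘ₗ (LinearMap.mulRight k (c ⊗ₜ[k] d)) ∘ₗ
    (TensorProduct.mk k H H α)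

@[simp] lemma Wmap_apply {k H : Type*} [Field k] [Ring H] [Algebra k H]
    (S : H →ₗ[k] H) (α a b c d m : H) :
    Wmap k S α a b c d m = (S b ⊗ₜ[k] S a) * ((α ⊗ₜ[k] m) * (c ⊗ₜ[k] d)) := rfl

lemma key_lemma {k H : Type*} [Field k] [Ring H] [Algebra k H]
    {ι : Type*} [Fintype ι]
    (Δ : H →ₐ[k] H ⊗[k] H) (ε : H →ₐ[k] k) (S : H →ₗ[k] H)
    (hS : ∀ a b : H, S (a * b) = S b * S a) (hS1 : S 1 = 1) (α : H)
    (X1 X2 X3 : ι → H)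
    (hal : ∀ h : H,
      LinearMap.mul' k H
        (TensorProduct.map ((LinearMap.mulRight k α).comp S) LinearMap.id (Δ h)) = ε h • α)
    (hce : (∑ i, ε (X2 i) • (X1 i ⊗ₜ[k] X3 i)) = 1)
    (u : H ⊗[k] (H ⊗[k] (H ⊗[k] H))) :
    Gmap k S α
        ((∑ i, X1 i ⊗ₜ[k] ((Algebra.TensorProduct.assoc k k k H H H) (Δ (X2 i) ⊗ₜ[k] X3 i))) * u)
      = Gmap k S α u := by
  have hA : ∀ h : H, Lmap k S α (Δ h) = ε h • α := by
    intro h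
    have := hal h
    simpa [Lmap] using this
  induction u using TensorProduct.induction_on with
  | zero => rw [q4_mul_zero]
  | add u v hu hv => rw [q4_mul_add, LinearMap.map_add, hu, hv, LinearMap.map_add]
  | tmul a w =>
      induction w using TensorProduct.induction_on with
      | zero => rw [tmul_zero, q4_mul_zero]
      | add w1 w2 h1 h2 =>
          rw [tmul_add, q4_mul_add, LinearMap.map_add, h1, h2, LinearMap.map_add]
      | tmul b v =>
          induction v using TensorProduct.induction_on with
          | zero => rw [tmul_zero, tmul_zero, q4_mul_zero]
          | add v1 v2 h1 h2 =>
              rw [tmul_add, tmul_add, q4_mul_add, LinearMap.map_add, h1, h2, LinearMap.map_add]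
          | tmul c d =>
              rw [q4_sum_mul]
              have hgs := map_sum (Gmap k S α)
                (fun i => (X1 i ⊗ₜ[k] ((Algebra.TensorProduct.assoc k k k H H H) (Δ (X2 i) ⊗ₜ[k] X3 i)))
                    * (a ⊗ₜ[k] (b ⊗ₜ[k] (c ⊗ₜ[k] d)))) Finset.univ
              rw [hgs]
              have hterm : ∀ i,
                  Gmap k S α ((X1 i ⊗ₜ[k] ((Algebra.TensorProduct.assoc k k k H H H) (Δ (X2 i) ⊗ₜ[k] X3 i)))
                      * (a ⊗ₜ[k] (b ⊗ₜ[k] (c ⊗ₜ[k] d))))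
                    = Wmap k S α a b c d (ε (X2 i) • Lmap k S α (X1 i ⊗ₜ[k] X3 i)) := by
                intro i
                rw [aux2 S hS α (X1 i) (X3 i) a b c d (Δ (X2 i)), hA (X2 i),
                  Wmap_apply, Lmap_tmul, TensorProduct.smul_tmul]
              rw [Finset.sum_congr rfl fun i _ => hterm i]
              have hws := map_sum (Wmap k S α a b c d)
                (fun i => ε (X2 i) • Lmap k S α (X1 i ⊗ₜ[k] X3 i)) Finset.univ
              rw [← hws]
              have hsum : (∑ i, ε (X2 i) • Lmap k S α (X1 i ⊗ₜ[k] X3 i))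
                  = Lmap k S α (∑ i, ε (X2 i) • (X1 i ⊗ₜ[k] X3 i)) := by
                rw [map_sum]
                exact Finset.sum_congr rfl fun i _ => (LinearMap.map_smul _ _ _).symm
              rw [hsum, hce]
              have hone : Lmap k S α (1 : H ⊗[k] H) = α := by
                rw [Algebra.TensorProduct.one_def, Lmap_tmul, hS1, one_mul, mul_one]
              rw [hone, Wmap_apply, Algebra.TensorProduct.tmul_mul_tmul,
                Algebra.TensorProduct.tmul_mul_tmul, Gmap_tmul, mul_assoc, mul_assoc]

noncomputable def F5 (k : Type*) {H : Type*} [Field k] [Ring H] [Algebra k H]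
    (Δ : H →ₐ[k] H ⊗[k] H) : (H ⊗[k] (H ⊗[k] H)) →ₐ[k] H ⊗[k] (H ⊗[k] (H ⊗[k] H)) :=
  ((Algebra.TensorProduct.assoc k k k H H (H ⊗[k] H)).toAlgHom.comp
    (Algebra.TensorProduct.map Δ (AlgHom.id k (H ⊗[k] H))))

@[simp] lemma F5_tmul {k H : Type*} [Field k] [Ring H] [Algebra k H]
    (Δ : H →ₐ[k] H ⊗[k] H) (a b c : H) :
    F5 k Δ (a ⊗ₜ[k] (b ⊗ₜ[k] c))
      = (Algebra.TensorProduct.assoc k k k H H (H ⊗[k] H)) (Δ a ⊗ₜ[k] (b ⊗ₜ[k] c)) := by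
  simp [F5]

lemma pentagon_rearrange {k H : Type*} [Field k] [Ring H] [Algebra k H]
    {ι κ : Type*} [Fintype ι] [Fintype κ]
    (Δ : H →ₐ[k] H ⊗[k] H) (X1 X2 X3 : ι → H) (x1 x2 x3 : κ → H)
    (hir : (∑ i, X1 i ⊗ₜ[k] (X2 i ⊗ₜ[k] X3 i)) * (∑ j, x1 j ⊗ₜ[k] (x2 j ⊗ₜ[k] x3 j)) = 1)
    (hil : (∑ j, x1 j ⊗ₜ[k] (x2 j ⊗ₜ[k] x3 j)) * (∑ i, X1 i ⊗ₜ[k] (X2 i ⊗ₜ[k] X3 i)) = 1)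
    (hcoc :
      ((∑ i, (1 : H) ⊗ₜ[k] (X1 i ⊗ₜ[k] (X2 i ⊗ₜ[k] X3 i)))
          * (∑ i, X1 i ⊗ₜ[k] ((Algebra.TensorProduct.assoc k k k H H H) (Δ (X2 i) ⊗ₜ[k] X3 i)))
          * (∑ i, X1 i ⊗ₜ[k] (X2 i ⊗ₜ[k] (X3 i ⊗ₜ[k] (1 : H)))))
        = (∑ i, X1 i ⊗ₜ[k] (X2 i ⊗ₜ[k] Δ (X3 i)))
          * (∑ i, (Algebra.TensorProduct.assoc k k k H H (H ⊗[k] H))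
              (Δ (X1 i) ⊗ₜ[k] (X2 i ⊗ₜ[k] X3 i)))) :
    (∑ j, (1 : H) ⊗ₜ[k] (x1 j ⊗ₜ[k] (x2 j ⊗ₜ[k] x3 j)))
        * (∑ i, X1 i ⊗ₜ[k] (X2 i ⊗ₜ[k] Δ (X3 i)))
      = (∑ i, X1 i ⊗ₜ[k] ((Algebra.TensorProduct.assoc k k k H H H) (Δ (X2 i) ⊗ₜ[k] X3 i)))
          * ((∑ i, X1 i ⊗ₜ[k] (X2 i ⊗ₜ[k] (X3 i ⊗ₜ[k] (1 : H))))
            * (∑ j, (Algebra.TensorProduct.assoc k k k H H (H ⊗[k] H))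
                (Δ (x1 j) ⊗ₜ[k] (x2 j ⊗ₜ[k] x3 j)))) := by
  have hP5 : (∑ i, (Algebra.TensorProduct.assoc k k k H H (H ⊗[k] H))
      (Δ (X1 i) ⊗ₜ[k] (X2 i ⊗ₜ[k] X3 i)))
      = F5 k Δ (∑ i, X1 i ⊗ₜ[k] (X2 i ⊗ₜ[k] X3 i)) := by
    rw [map_sum]
    exact Finset.sum_congr rfl fun i _ => (F5_tmul Δ _ _ _).symm
  have hP5inv : (∑ j, (Algebra.TensorProduct.assoc k k k H H (H ⊗[k] H))
      (Δ (x1 j) ⊗ₜ[k] (x2 j ⊗ₜ[k] x3 j)))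
      = F5 k Δ (∑ j, x1 j ⊗ₜ[k] (x2 j ⊗ₜ[k] x3 j)) := by
    rw [map_sum]
    exact Finset.sum_congr rfl fun j _ => (F5_tmul Δ _ _ _).symm
  have hP1 : (∑ i, (1 : H) ⊗ₜ[k] (X1 i ⊗ₜ[k] (X2 i ⊗ₜ[k] X3 i)))
      = (Algebra.TensorProduct.includeRight :
          (H ⊗[k] (H ⊗[k] H)) →ₐ[k] H ⊗[k] (H ⊗[k] (H ⊗[k] H)))
          (∑ i, X1 i ⊗ₜ[k] (X2 i ⊗ₜ[k] X3 i)) := by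
    rw [map_sum]
    exact Finset.sum_congr rfl fun i _ => rfl
  have hP1inv : (∑ j, (1 : H) ⊗ₜ[k] (x1 j ⊗ₜ[k] (x2 j ⊗ₜ[k] x3 j)))
      = (Algebra.TensorProduct.includeRight :
          (H ⊗[k] (H ⊗[k] H)) →ₐ[k] H ⊗[k] (H ⊗[k] (H ⊗[k] H)))
          (∑ j, x1 j ⊗ₜ[k] (x2 j ⊗ₜ[k] x3 j)) := by
    rw [map_sum]
    exact Finset.sum_congr rfl fun j _ => rfl
  have e1 : (∑ i, (Algebra.TensorProduct.assoc k k k H H (H ⊗[k] H))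
      (Δ (X1 i) ⊗ₜ[k] (X2 i ⊗ₜ[k] X3 i)))
      * (∑ j, (Algebra.TensorProduct.assoc k k k H H (H ⊗[k] H))
          (Δ (x1 j) ⊗ₜ[k] (x2 j ⊗ₜ[k] x3 j))) = 1 := by
    rw [hP5, hP5inv]
    calc F5 k Δ (∑ i, X1 i ⊗ₜ[k] (X2 i ⊗ₜ[k] X3 i))
          * F5 k Δ (∑ j, x1 j ⊗ₜ[k] (x2 j ⊗ₜ[k] x3 j))
        = F5 k Δ ((∑ i, X1 i ⊗ₜ[k] (X2 i ⊗ₜ[k] X3 i))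
            * (∑ j, x1 j ⊗ₜ[k] (x2 j ⊗ₜ[k] x3 j))) := (map_mul _ _ _).symm
      _ = F5 k Δ 1 := by rw [hir]
      _ = 1 := (F5 k Δ).map_one
  have e2 : (∑ j, (1 : H) ⊗ₜ[k] (x1 j ⊗ₜ[k] (x2 j ⊗ₜ[k] x3 j)))
      * (∑ i, (1 : H) ⊗ₜ[k] (X1 i ⊗ₜ[k] (X2 i ⊗ₜ[k] X3 i))) = 1 := by
    rw [hP1, hP1inv]
    calc (Algebra.TensorProduct.includeRight :
            (H ⊗[k] (H ⊗[k] H)) →ₐ[k] H ⊗[k] (H ⊗[k] (H ⊗[k] H)))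
            (∑ j, x1 j ⊗ₜ[k] (x2 j ⊗ₜ[k] x3 j))
          * (Algebra.TensorProduct.includeRight :
            (H ⊗[k] (H ⊗[k] H)) →ₐ[k] H ⊗[k] (H ⊗[k] (H ⊗[k] H)))
            (∑ i, X1 i ⊗ₜ[k] (X2 i ⊗ₜ[k] X3 i))
        = (Algebra.TensorProduct.includeRight :
            (H ⊗[k] (H ⊗[k] H)) →ₐ[k] H ⊗[k] (H ⊗[k] (H ⊗[k] H)))
            ((∑ j, x1 j ⊗ₜ[k] (x2 j ⊗ₜ[k] x3 j))
              * (∑ i, X1 i ⊗ₜ[k] (X2 i ⊗ₜ[k] X3 i))) := (map_mul _ _ _).symm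
      _ = 1 := by rw [hil]; exact map_one _
  calc (∑ j, (1 : H) ⊗ₜ[k] (x1 j ⊗ₜ[k] (x2 j ⊗ₜ[k] x3 j)))
        * (∑ i, X1 i ⊗ₜ[k] (X2 i ⊗ₜ[k] Δ (X3 i)))
      = (∑ j, (1 : H) ⊗ₜ[k] (x1 j ⊗ₜ[k] (x2 j ⊗ₜ[k] x3 j)))
        * ((∑ i, X1 i ⊗ₜ[k] (X2 i ⊗ₜ[k] Δ (X3 i)))
          * (∑ i, (Algebra.TensorProduct.assoc k k k H H (H ⊗[k] H))
              (Δ (X1 i) ⊗ₜ[k] (X2 i ⊗ₜ[k] X3 i)))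
          * (∑ j, (Algebra.TensorProduct.assoc k k k H H (H ⊗[k] H))
              (Δ (x1 j) ⊗ₜ[k] (x2 j ⊗ₜ[k] x3 j)))) := by
        rw [q4_mul_assoc, e1, q4_mul_one]
    _ = (∑ j, (1 : H) ⊗ₜ[k] (x1 j ⊗ₜ[k] (x2 j ⊗ₜ[k] x3 j)))
        * ((∑ i, (1 : H) ⊗ₜ[k] (X1 i ⊗ₜ[k] (X2 i ⊗ₜ[k] X3 i)))
          * (∑ i, X1 i ⊗ₜ[k] ((Algebra.TensorProduct.assoc k k k H H H) (Δ (X2 i) ⊗ₜ[k] X3 i)))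
          * (∑ i, X1 i ⊗ₜ[k] (X2 i ⊗ₜ[k] (X3 i ⊗ₜ[k] (1 : H))))
          * (∑ j, (Algebra.TensorProduct.assoc k k k H H (H ⊗[k] H))
              (Δ (x1 j) ⊗ₜ[k] (x2 j ⊗ₜ[k] x3 j)))) := by rw [hcoc]
    _ = (∑ j, (1 : H) ⊗ₜ[k] (x1 j ⊗ₜ[k] (x2 j ⊗ₜ[k] x3 j)))
          * (∑ i, (1 : H) ⊗ₜ[k] (X1 i ⊗ₜ[k] (X2 i ⊗ₜ[k] X3 i)))
        * ((∑ i, X1 i ⊗ₜ[k] ((Algebra.TensorProduct.assoc k k k H H H) (Δ (X2 i) ⊗ₜ[k] X3 i)))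
          * ((∑ i, X1 i ⊗ₜ[k] (X2 i ⊗ₜ[k] (X3 i ⊗ₜ[k] (1 : H))))
            * (∑ j, (Algebra.TensorProduct.assoc k k k H H (H ⊗[k] H))
                (Δ (x1 j) ⊗ₜ[k] (x2 j ⊗ₜ[k] x3 j))))) := by
        rw [q4_mul_assoc _ _ (∑ j, (Algebra.TensorProduct.assoc k k k H H (H ⊗[k] H))
            (Δ (x1 j) ⊗ₜ[k] (x2 j ⊗ₜ[k] x3 j))),
          q4_mul_assoc _ _ ((∑ i, X1 i ⊗ₜ[k] (X2 i ⊗ₜ[k] (X3 i ⊗ₜ[k] (1 : H))))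
            * (∑ j, (Algebra.TensorProduct.assoc k k k H H (H ⊗[k] H))
                (Δ (x1 j) ⊗ₜ[k] (x2 j ⊗ₜ[k] x3 j)))),
          ← q4_mul_assoc (∑ j, (1 : H) ⊗ₜ[k] (x1 j ⊗ₜ[k] (x2 j ⊗ₜ[k] x3 j)))]
    _ = (∑ i, X1 i ⊗ₜ[k] ((Algebra.TensorProduct.assoc k k k H H H) (Δ (X2 i) ⊗ₜ[k] X3 i)))
          * ((∑ i, X1 i ⊗ₜ[k] (X2 i ⊗ₜ[k] (X3 i ⊗ₜ[k] (1 : H))))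
            * (∑ j, (Algebra.TensorProduct.assoc k k k H H (H ⊗[k] H))
                (Δ (x1 j) ⊗ₜ[k] (x2 j ⊗ₜ[k] x3 j)))) := by
        rw [e2, q4_one_mul]

/-- In a quasi-Hopf algebra, the element
`γ = S(x¹X²) α x² X³₁ ⊗ S(X¹) α x³ X³₂` also equals
`S(X² x¹₂) α X³ x² ⊗ S(X¹ x¹₁) α x³`. -/
theorem gamma_two_expressions
    {k H : Type*} [Field k] [Ring H] [Algebra k H]
    {ι κ : Type*} [Fintype ι] [Fintype κ]
    (Q : QuasiHopf k H ι κ) :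
    (∑ j, ∑ i,
      ((Q.S (Q.x1 j * Q.X2 i) * Q.α * Q.x2 j) ⊗ₜ[k] (Q.S (Q.X1 i) * Q.α * Q.x3 j))
        * Q.Δ (Q.X3 i))
    = (∑ i, ∑ j,
        (TensorProduct.map Q.S Q.S
            ((Q.X2 i ⊗ₜ[k] Q.X1 i) * (TensorProduct.comm k H H) (Q.Δ (Q.x1 j))))
          * ((Q.α * Q.X3 i * Q.x2 j) ⊗ₜ[k] (Q.α * Q.x3 j))) := by
  classical
  obtain ⟨⟨Δ, ε, X1, X2, X3, x1, x2, x3, hir, hil, _hqc, _hcr, _hcl, hcoc, hce⟩,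
    S, hSmul, hS1, α, β, hal, _har, _hphi, _hphiinv⟩ := Q
  dsimp only at *
  have hpent := pentagon_rearrange Δ X1 X2 X3 x1 x2 x3 hir hil hcoc
  have hkey := key_lemma Δ ε S hSmul hS1 α X1 X2 X3 hal hce
    ((∑ i, X1 i ⊗ₜ[k] (X2 i ⊗ₜ[k] (X3 i ⊗ₜ[k] (1 : H))))
      * (∑ j, (Algebra.TensorProduct.assoc k k k H H (H ⊗[k] H))
          (Δ (x1 j) ⊗ₜ[k] (x2 j ⊗ₜ[k] x3 j))))
  -- LHS = G (Pinv1 * P4)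
  have hprodL : (∑ j, (1 : H) ⊗ₜ[k] (x1 j ⊗ₜ[k] (x2 j ⊗ₜ[k] x3 j)))
      * (∑ i, X1 i ⊗ₜ[k] (X2 i ⊗ₜ[k] Δ (X3 i)))
      = ∑ j, ∑ i, ((1 : H) ⊗ₜ[k] (x1 j ⊗ₜ[k] (x2 j ⊗ₜ[k] x3 j)))
          * (X1 i ⊗ₜ[k] (X2 i ⊗ₜ[k] Δ (X3 i))) := by
    rw [q4_sum_mul]
    exact Finset.sum_congr rfl fun j _ => q4_mul_sum _ _
  have hL : Gmap k S α ((∑ j, (1 : H) ⊗ₜ[k] (x1 j ⊗ₜ[k] (x2 j ⊗ₜ[k] x3 j)))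
      * (∑ i, X1 i ⊗ₜ[k] (X2 i ⊗ₜ[k] Δ (X3 i))))
      = (∑ j, ∑ i,
          ((S (x1 j * X2 i) * α * x2 j) ⊗ₜ[k] (S (X1 i) * α * x3 j)) * Δ (X3 i)) := by
    rw [hprodL]
    rw [map_sum]
    refine Finset.sum_congr rfl fun j _ => ?_
    rw [map_sum]
    refine Finset.sum_congr rfl fun i _ => ?_
    rw [Algebra.TensorProduct.tmul_mul_tmul, Algebra.TensorProduct.tmul_mul_tmul, one_mul,
      Gmap_tmul_tmul, ← t2_mul_assoc, Algebra.TensorProduct.tmul_mul_tmul]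
  -- RHS = G (P3 * Pinv5)
  have hprodR : (∑ i, X1 i ⊗ₜ[k] (X2 i ⊗ₜ[k] (X3 i ⊗ₜ[k] (1 : H))))
      * (∑ j, (Algebra.TensorProduct.assoc k k k H H (H ⊗[k] H))
          (Δ (x1 j) ⊗ₜ[k] (x2 j ⊗ₜ[k] x3 j)))
      = ∑ i, ∑ j, (X1 i ⊗ₜ[k] (X2 i ⊗ₜ[k] (X3 i ⊗ₜ[k] (1 : H))))
          * ((Algebra.TensorProduct.assoc k k k H H (H ⊗[k] H))
              (Δ (x1 j) ⊗ₜ[k] (x2 j ⊗ₜ[k] x3 j))) := by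
    rw [q4_sum_mul]
    exact Finset.sum_congr rfl fun i _ => q4_mul_sum _ _
  have hR : Gmap k S α ((∑ i, X1 i ⊗ₜ[k] (X2 i ⊗ₜ[k] (X3 i ⊗ₜ[k] (1 : H))))
      * (∑ j, (Algebra.TensorProduct.assoc k k k H H (H ⊗[k] H))
          (Δ (x1 j) ⊗ₜ[k] (x2 j ⊗ₜ[k] x3 j))))
      = (∑ i, ∑ j,
          (TensorProduct.map S S
              ((X2 i ⊗ₜ[k] X1 i) * (TensorProduct.comm k H H) (Δ (x1 j))))
            * ((α * X3 i * x2 j) ⊗ₜ[k] (α * x3 j))) := by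
    rw [hprodR]
    rw [map_sum]
    refine Finset.sum_congr rfl fun i _ => ?_
    rw [map_sum]
    refine Finset.sum_congr rfl fun j _ => ?_
    exact aux3 S α (X1 i) (X2 i) (X3 i) (x2 j) (x3 j) (Δ (x1 j))
  calc (∑ j, ∑ i,
        ((S (x1 j * X2 i) * α * x2 j) ⊗ₜ[k] (S (X1 i) * α * x3 j)) * Δ (X3 i))
      = Gmap k S α ((∑ j, (1 : H) ⊗ₜ[k] (x1 j ⊗ₜ[k] (x2 j ⊗ₜ[k] x3 j)))
          * (∑ i, X1 i ⊗ₜ[k] (X2 i ⊗ₜ[k] Δ (X3 i)))) := hL.symm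
    _ = Gmap k S α
          ((∑ i, X1 i ⊗ₜ[k] ((Algebra.TensorProduct.assoc k k k H H H) (Δ (X2 i) ⊗ₜ[k] X3 i)))
            * ((∑ i, X1 i ⊗ₜ[k] (X2 i ⊗ₜ[k] (X3 i ⊗ₜ[k] (1 : H))))
              * (∑ j, (Algebra.TensorProduct.assoc k k k H H (H ⊗[k] H))
                  (Δ (x1 j) ⊗ₜ[k] (x2 j ⊗ₜ[k] x3 j))))) := by rw [hpent]
    _ = Gmap k S α ((∑ i, X1 i ⊗ₜ[k] (X2 i ⊗ₜ[k] (X3 i ⊗ₜ[k] (1 : H))))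
          * (∑ j, (Algebra.TensorProduct.assoc k k k H H (H ⊗[k] H))
              (Δ (x1 j) ⊗ₜ[k] (x2 j ⊗ₜ[k] x3 j)))) := hkey
    _ = _ := hR
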